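/- arXiv:1306.2184 — 2 statements merged into one kernel-verified Lean document; each statement's English description precedes it below -/
import Mathlib

section
/- For invertible multivectors B₁,…,B_d and any A ∈ Cl(p,q): B₁⋯B_d·A = Σ_{j∈{0,1}^d} (−1)^{|j|} A_{c^j(B_d,…,B₁)} · B₁⋯B_d, where A_{c^j(B_d,…,B₁)} applies the projections in reversed order c^{j₁}_{B₁}∘⋯∘c^{j_d}_{B_d} (i.e. first with respect to B_d). -/
/-- The commuting/anticommuting projections `c⁰_B(A) = ½(A + B⁻¹AB)`,
`c¹_B(A) = ½(A − B⁻¹AB)` (with `B⁻¹ = β⁻¹ B`, valid when `B² = β·1`). -/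
noncomputable def cProj {V : Type*} [AddCommGroup V] [Module ℝ V] {Q : QuadraticForm ℝ V}
    (b : Bool) (β : ℝ) (B A : CliffordAlgebra Q) : CliffordAlgebra Q :=
  if b then (2⁻¹ : ℝ) • (A - (β⁻¹ • B) * A * B) else (2⁻¹ : ℝ) • (A + (β⁻¹ • B) * A * B)

/-- Iterated decomposition `A_{c^j(→B)}`: apply `c^{j₁}_{B₁}` first, then `c^{j₂}_{B₂}`, …,
finally `c^{j_d}_{B_d}`. -/
noncomputable def iterProj {V : Type*} [AddCommGroup V] [Module ℝ V] {Q : QuadraticForm ℝ V}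
    {d : ℕ} (β : Fin d → ℝ) (B : Fin d → CliffordAlgebra Q) (j : Fin d → Bool)
    (A : CliffordAlgebra Q) : CliffordAlgebra Q :=
  (List.finRange d).foldl (fun acc k => cProj (j k) (β k) (B k) acc) A

/-- Iterated decomposition `A_{c^j(←B)} = A_{c^j(B_d,…,B₁)}`: apply `c^{j_d}_{B_d}` first,
then …, finally `c^{j₁}_{B₁}`. -/
noncomputable def iterProjRev {V : Type*} [AddCommGroup V] [Module ℝ V] {Q : QuadraticForm ℝ V}
    {d : ℕ} (β : Fin d → ℝ) (B : Fin d → CliffordAlgebra Q) (j : Fin d → Bool)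
    (A : CliffordAlgebra Q) : CliffordAlgebra Q :=
  ((List.finRange d).reverse).foldl (fun acc k => cProj (j k) (β k) (B k) acc) A


section Aux
variable {V : Type*} [AddCommGroup V] [Module ℝ V] {Q : QuadraticForm ℝ V}

lemma key_cProj (β0 : ℝ) (hβ0 : β0 ≠ 0) (B0 : CliffordAlgebra Q)
    (hB0 : B0 * B0 = algebraMap ℝ (CliffordAlgebra Q) β0) (X : CliffordAlgebra Q) :
    B0 * X = (cProj false β0 B0 X - cProj true β0 B0 X) * B0 := by
  have h1 : cProj false β0 B0 X - cProj true β0 B0 X = β0⁻¹ • (B0 * X * B0) := by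
    simp only [cProj, Bool.false_eq_true, if_false, if_true, smul_mul_assoc]
    module
  rw [h1, smul_mul_assoc, mul_assoc (B0 * X), hB0, ← Algebra.commutes, ← Algebra.smul_def,
    smul_smul, inv_mul_cancel₀ hβ0, one_smul]

lemma iterProjRev_cons {d : ℕ} (β : Fin (d+1) → ℝ) (B : Fin (d+1) → CliffordAlgebra Q)
    (b : Bool) (j' : Fin d → Bool) (A : CliffordAlgebra Q) :
    iterProjRev β B (Fin.cons b j') A =
      cProj b (β 0) (B 0)
        (iterProjRev (fun k => β k.succ) (fun k => B k.succ) j' A) := by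
  simp only [iterProjRev, List.finRange_succ, List.reverse_cons, List.foldl_append,
    List.foldl_cons, List.foldl_nil, List.foldl_reverse, Fin.cons_zero]
  simp [List.foldr_map, Fin.cons_succ]

lemma sign_prod_aux {d : ℕ} (j : Fin d → Bool) :
    ((-1 : ℝ) ^ (Finset.univ.filter fun k => j k = true).card) =
      ∏ k, (if j k then (-1 : ℝ) else 1) := by
  rw [← Finset.prod_const, Finset.prod_filter]

lemma sign_cons_aux {d : ℕ} (b : Bool) (j' : Fin d → Bool) :
    ((-1 : ℝ) ^ (Finset.univ.filter fun k => (Fin.cons b j' : Fin (d+1) → Bool) k = true).card) =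
      (if b then (-1 : ℝ) else 1) *
        (-1 : ℝ) ^ (Finset.univ.filter fun k => j' k = true).card := by
  rw [sign_prod_aux, sign_prod_aux, Fin.prod_univ_succ]
  simp [Fin.cons_succ]

end Aux

/-- `B₁⋯B_d·A = (Σ_j (−1)^{|j|} A_{c^j(B_d,…,B₁)}) · B₁⋯B_d`, where the projections are
applied in reversed order (first with respect to `B_d`). -/
theorem prod_mul_eq_sum_iterProjRev_mul {V : Type*} [AddCommGroup V] [Module ℝ V]
    (Q : QuadraticForm ℝ V) {d : ℕ} (β : Fin d → ℝ) (B : Fin d → CliffordAlgebra Q)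
    (hβ : ∀ k, β k ≠ 0)
    (hB : ∀ k, B k * B k = algebraMap ℝ (CliffordAlgebra Q) (β k))
    (A : CliffordAlgebra Q) :
    (List.ofFn B).prod * A =
      (∑ j : Fin d → Bool,
          ((-1 : ℝ) ^ (Finset.univ.filter fun k => j k = true).card • iterProjRev β B j A)) *
        (List.ofFn B).prod := by
  induction d with
  | zero =>
      simp [iterProjRev]
  | succ d ih =>
      rw [List.ofFn_succ, List.prod_cons, mul_assoc,
        ih (fun k => β k.succ) (fun k => B k.succ) (fun k => hβ _) (fun k => hB _), ← mul_assoc]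
      have hS : B 0 * (∑ j' : Fin d → Bool,
            ((-1 : ℝ) ^ (Finset.univ.filter fun k => j' k = true).card •
              iterProjRev (fun k => β k.succ) (fun k => B k.succ) j' A)) =
          (∑ j : Fin (d+1) → Bool,
            ((-1 : ℝ) ^ (Finset.univ.filter fun k => j k = true).card •
              iterProjRev β B j A)) * B 0 := by
        rw [← Equiv.sum_comp (Fin.consEquiv fun _ => Bool)
          (fun j => (-1 : ℝ) ^ (Finset.univ.filter fun k => j k = true).card •
            iterProjRev β B j A), Fintype.sum_prod_type, Fintype.sum_bool,
          add_mul, Finset.sum_mul, Finset.sum_mul, ← Finset.sum_add_distrib, Finset.mul_sum]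
        refine Finset.sum_congr rfl fun x _ => ?_
        simp only [Fin.consEquiv, Equiv.coe_fn_mk]
        rw [iterProjRev_cons, iterProjRev_cons]
        erw [sign_cons_aux, sign_cons_aux]
        rw [mul_smul_comm, key_cProj (β 0) (hβ 0) (B 0) (hB 0)]
        simp only [if_true, Bool.false_eq_true, if_false, one_mul, neg_one_mul, neg_smul,
          smul_sub, sub_mul, smul_mul_assoc]
        simp [smul_mul_assoc]
        abel
      rw [hS, mul_assoc]
end

section
/- If every function in F₁ takes values in the center of Cl(p,q), then the geometric Fourier transform is left linear over Cl(p,q): for A(x) = C·B(x) with constant C ∈ Cl(p,q), ℱ_{F₁,F₂}(A)(u) = C·ℱ_{F₁,F₂}(B)(u). Symmetrically, if every function in F₂ is central-valued, ℱ is right Cl(p,q)-linear. -/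
open MeasureTheory

/-- The integrand of the general geometric Fourier transform. -/
noncomputable def gftIntegrand {𝒢 : Type*} [NormedRing 𝒢] [NormedAlgebra ℝ 𝒢]
    [CompleteSpace 𝒢] {m μ κ : ℕ}
    (f1 : Fin μ → (Fin m → ℝ) → (Fin m → ℝ) → 𝒢)
    (f2 : Fin κ → (Fin m → ℝ) → (Fin m → ℝ) → 𝒢)
    (A : (Fin m → ℝ) → 𝒢) (u x : Fin m → ℝ) : 𝒢 :=
  (List.ofFn fun l => NormedSpace.exp (-(f1 l x u))).prod * A x *
    (List.ofFn fun l => NormedSpace.exp (-(f2 l x u))).prod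

/-- The general geometric Fourier transform `ℱ_{F₁,F₂}(A)(u)`. -/
noncomputable def gft {𝒢 : Type*} [NormedRing 𝒢] [NormedAlgebra ℝ 𝒢]
    [CompleteSpace 𝒢] {m μ κ : ℕ}
    (f1 : Fin μ → (Fin m → ℝ) → (Fin m → ℝ) → 𝒢)
    (f2 : Fin κ → (Fin m → ℝ) → (Fin m → ℝ) → 𝒢)
    (A : (Fin m → ℝ) → 𝒢) (u : Fin m → ℝ) : 𝒢 :=
  ∫ x, gftIntegrand f1 f2 A u x

/-- If every function in `F₁` is central-valued, the GFT is left `Cl(p,q)`-linear;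
symmetrically, if every function in `F₂` is central-valued, it is right linear. -/
theorem gft_central_linear {𝒢 : Type*} [NormedRing 𝒢] [NormedAlgebra ℝ 𝒢] [CompleteSpace 𝒢]
    {m μ κ : ℕ}
    (f1 : Fin μ → (Fin m → ℝ) → (Fin m → ℝ) → 𝒢)
    (f2 : Fin κ → (Fin m → ℝ) → (Fin m → ℝ) → 𝒢)
    (hf1 : ∀ l x u, ∃ r : ℝ, 0 < r ∧ f1 l x u * f1 l x u = algebraMap ℝ 𝒢 (-r))
    (hf2 : ∀ l x u, ∃ r : ℝ, 0 < r ∧ f2 l x u * f2 l x u = algebraMap ℝ 𝒢 (-r))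
    (C : 𝒢) (B : (Fin m → ℝ) → 𝒢)
    (hInt : ∀ u, Integrable (gftIntegrand f1 f2 B u)) :
    ((∀ l x u (D : 𝒢), f1 l x u * D = D * f1 l x u) →
      ∀ u, gft f1 f2 (fun x => C * B x) u = C * gft f1 f2 B u) ∧
    ((∀ l x u (D : 𝒢), f2 l x u * D = D * f2 l x u) →
      ∀ u, gft f1 f2 (fun x => B x * C) u = gft f1 f2 B u * C) := by
  constructor
  · intro hc u
    have key : ∀ x, gftIntegrand f1 f2 (fun x => C * B x) u x
        = C * gftIntegrand f1 f2 B u x := by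
      intro x
      have hP : Commute ((List.ofFn fun l => NormedSpace.exp (-(f1 l x u))).prod) C := by
        apply Commute.list_prod_left
        intro z hz
        rw [List.mem_ofFn] at hz
        obtain ⟨l, rfl⟩ := hz
        exact Commute.exp_left ((Commute.neg_left (hc l x u C)))
      simp only [gftIntegrand]
      rw [← mul_assoc, ← mul_assoc, hP.eq, mul_assoc C, mul_assoc C]
    simp only [gft]
    rw [show (fun x => gftIntegrand f1 f2 (fun x => C * B x) u x)
        = fun x => C * gftIntegrand f1 f2 B u x from funext key]
    exact ((ContinuousLinearMap.mul ℝ 𝒢 C).integral_comp_comm (hInt u))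
  · intro hc u
    have key : ∀ x, gftIntegrand f1 f2 (fun x => B x * C) u x
        = gftIntegrand f1 f2 B u x * C := by
      intro x
      have hP : Commute ((List.ofFn fun l => NormedSpace.exp (-(f2 l x u))).prod) C := by
        apply Commute.list_prod_left
        intro z hz
        rw [List.mem_ofFn] at hz
        obtain ⟨l, rfl⟩ := hz
        exact Commute.exp_left ((Commute.neg_left (hc l x u C)))
      simp only [gftIntegrand]
      rw [mul_assoc, mul_assoc, ← hP.eq, ← mul_assoc, ← mul_assoc]
    simp only [gft]
    rw [show (fun x => gftIntegrand f1 f2 (fun x => B x * C) u x)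
        = fun x => gftIntegrand f1 f2 B u x * C from funext key]
    exact (((ContinuousLinearMap.mul ℝ 𝒢).flip C).integral_comp_comm (hInt u))
end
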